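/- arXiv:1907.07276 — 2 statements merged into one kernel-verified Lean document; each statement's English description precedes it below -/
import Mathlib

section
/- Let θ : [0,∞) → [0,∞) be L-Lipschitz, and let x₁,…,xₙ, x̃₁,…,x̃ₙ ∈ ℝ^d and a₁,…,aₙ, ã₁,…,ãₙ ∈ [0,∞). For the weighted empirical measures μ = (1/n)∑ᵢ θ(aᵢ) δ_{xᵢ} and μ̃ = (1/n)∑ᵢ θ(ãᵢ) δ_{x̃ᵢ}, one has d_BL(μ, μ̃) ≤ (1/n) ∑ᵢ (L|aᵢ − ãᵢ| + θ(aᵢ)‖xᵢ − x̃ᵢ‖). -/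
theorem dBL_weighted_empirical
    (d n : ℕ) (hn : 0 < n) (L : ℝ) (hL : 0 ≤ L)
    (θ : ℝ → ℝ) (hθnn : ∀ a ∈ Set.Ici (0:ℝ), 0 ≤ θ a)
    (hθlip : ∀ a ∈ Set.Ici (0:ℝ), ∀ b ∈ Set.Ici (0:ℝ), |θ a - θ b| ≤ L * |a - b|)
    (x x' : Fin n → EuclideanSpace ℝ (Fin d))
    (a a' : Fin n → ℝ) (ha : ∀ i, 0 ≤ a i) (ha' : ∀ i, 0 ≤ a' i)
    (f : EuclideanSpace ℝ (Fin d) → ℝ)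
    (hfb : ∀ z, |f z| ≤ 1) (hfl : LipschitzWith 1 f) :
    |(1 / (n:ℝ)) * ∑ i, (θ (a i) * f (x i) - θ (a' i) * f (x' i))|
      ≤ (1 / (n:ℝ)) * ∑ i, (L * |a i - a' i| + θ (a i) * ‖x i - x' i‖) := by
  rw [abs_mul, abs_of_nonneg (by positivity : (0:ℝ) ≤ 1 / (n:ℝ))]
  apply mul_le_mul_of_nonneg_left _ (by positivity)
  refine (Finset.abs_sum_le_sum_abs _ _).trans (Finset.sum_le_sum fun i _ => ?_)
  have key : θ (a i) * f (x i) - θ (a' i) * f (x' i)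
      = θ (a i) * (f (x i) - f (x' i)) + (θ (a i) - θ (a' i)) * f (x' i) := by ring
  rw [key]
  refine (abs_add_le _ _).trans ?_
  rw [abs_mul, abs_mul, abs_of_nonneg (hθnn _ (ha i))]
  have h1 : |f (x i) - f (x' i)| ≤ ‖x i - x' i‖ := by
    have := hfl.dist_le_mul (x i) (x' i)
    rwa [NNReal.coe_one, one_mul, Real.dist_eq, dist_eq_norm] at this
  have h2 : |θ (a i) - θ (a' i)| * |f (x' i)| ≤ L * |a i - a' i| := by
    calc |θ (a i) - θ (a' i)| * |f (x' i)| ≤ |θ (a i) - θ (a' i)| * 1 :=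
          mul_le_mul_of_nonneg_left (hfb _) (abs_nonneg _)
      _ = |θ (a i) - θ (a' i)| := mul_one _
      _ ≤ L * |a i - a' i| := hθlip _ (ha i) _ (ha' i)
  have h3 : θ (a i) * |f (x i) - f (x' i)| ≤ θ (a i) * ‖x i - x' i‖ :=
    mul_le_mul_of_nonneg_left h1 (hθnn _ (ha i))
  linarith
end

section
/- The map ν ↦ (t ↦ ν_t), sending a probability measure ν on C([0,T]; ℝ^d) to its flow of time-marginals, is continuous from 𝒫(C([0,T];ℝ^d)) with the weak topology into C([0,T]; 𝒫(ℝ^d)) with the topology of uniform convergence (where 𝒫(ℝ^d) carries the bounded-Lipschitz metric). -/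
open MeasureTheory
open scoped ENNReal NNReal

noncomputable section

/-- The path space `C([0,T]; ℝ^d)`. -/
abbrev PathSpace (d : ℕ) (T : ℝ) := C(Set.Icc (0:ℝ) T, EuclideanSpace ℝ (Fin d))

instance (d : ℕ) (T : ℝ) : MeasurableSpace (PathSpace d T) := borel _
instance (d : ℕ) (T : ℝ) : BorelSpace (PathSpace d T) := ⟨rfl⟩

/-- The time-`t` marginal of a probability measure on path space: the pushforward
under the (continuous, hence measurable) evaluation map `x ↦ x(t)`. -/
def marginalFlow (d : ℕ) (T : ℝ) (ν : ProbabilityMeasure (PathSpace d T))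
    (t : Set.Icc (0:ℝ) T) : ProbabilityMeasure (EuclideanSpace ℝ (Fin d)) :=
  ν.map (f := fun x : PathSpace d T => x t)
    (ContinuousEvalConst.continuous_eval_const t).measurable.aemeasurable

/-- Auxiliary: for a monotone sequence of measurable sets covering the whole space,
the measures of the complements eventually get below any positive threshold. -/
lemma aux_compl_lt {Ω' : Type*} [MeasurableSpace Ω'] (μ : Measure Ω') [IsProbabilityMeasure μ]
    (V : ℕ → Set Ω') (hmeas : ∀ n, MeasurableSet (V n)) (hmono : Monotone V)
    (hcov : (⋃ n, V n) = Set.univ) {η : ℝ≥0∞} (hη : 0 < η) : ∃ n, μ (V n)ᶜ < η := by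
  have hanti : Antitone fun n => (V n)ᶜ := fun a b hab => Set.compl_subset_compl.mpr (hmono hab)
  have h1 : Filter.Tendsto (fun n => μ (V n)ᶜ) Filter.atTop (nhds (μ (⋂ n, (V n)ᶜ))) := by
    simpa [Function.comp_def] using
      tendsto_measure_iInter_atTop (fun n => (hmeas n).compl.nullMeasurableSet) hanti
        ⟨0, measure_ne_top μ _⟩
  have h2 : (⋂ n, (V n)ᶜ) = ∅ := by rw [← Set.compl_iUnion, hcov, Set.compl_univ]
  rw [h2, measure_empty] at h1
  exact (h1.eventually_lt_const hη).exists

/-- The map sending a probability measure `ν` on `C([0,T];ℝ^d)` to its flow of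
time-marginals `t ↦ ν_t` is well defined with continuous flows, and is continuous
from the weak topology into `C([0,T]; 𝒫(ℝ^d))` with uniform convergence; the latter
is expressed as joint continuity in `(ν, t)` (equivalent to continuity into the
compact-open topology on `C([0,T]; 𝒫(ℝ^d))` since `[0,T]` is compact). -/
theorem marginalFlow_continuous (d : ℕ) (T : ℝ) (hT : 0 < T) :
    (∀ ν : ProbabilityMeasure (PathSpace d T), Continuous (marginalFlow d T ν)) ∧
      Continuous (Function.uncurry (marginalFlow d T)) := by
  have evalC : ∀ t : Set.Icc (0:ℝ) T, Continuous (fun x : PathSpace d T => x t) :=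
    fun t => ContinuousEvalConst.continuous_eval_const t
  have key : Continuous (Function.uncurry (marginalFlow d T)) := by
    rw [continuous_iff_continuousAt]
    rintro ⟨ν₀, t₀⟩
    have hfst : Filter.Tendsto Prod.fst (nhds (ν₀, t₀)) (nhds ν₀) := continuousAt_fst
    have hsnd : Filter.Tendsto Prod.snd (nhds (ν₀, t₀)) (nhds t₀) := continuousAt_snd
    refine ProbabilityMeasure.tendsto_iff_forall_integral_tendsto.mpr ?_
    intro g
    have key_int : ∀ p : ProbabilityMeasure (PathSpace d T) × Set.Icc (0:ℝ) T,
        ∫ ω, g ω ∂(Function.uncurry (marginalFlow d T) p).toMeasure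
          = ∫ x, g (x p.2) ∂(p.1 : Measure (PathSpace d T)) := by
      rintro ⟨ν, t⟩
      have hrfl : (Function.uncurry (marginalFlow d T) (ν, t)).toMeasure
          = (ν : Measure (PathSpace d T)).map (fun x : PathSpace d T => x t) := rfl
      rw [hrfl]
      exact integral_map ((evalC t).measurable.aemeasurable)
        g.continuous.measurable.aestronglyMeasurable
    simp only [key_int]
    rw [Metric.tendsto_nhds]
    intro ε εpos
    set C := ‖g‖ with hCdef
    have hC0 : 0 ≤ C := norm_nonneg g
    set εr : ℝ := ε / (8 * (C + 1)) with hεrdef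
    have hεrpos : 0 < εr := by positivity
    -- Step 1: choose the radius m
    obtain ⟨m, hm⟩ := aux_compl_lt (ν₀ : Measure (PathSpace d T))
      (fun m => (fun x : PathSpace d T => x t₀) ⁻¹' Metric.ball 0 m)
      (fun m => (Metric.isOpen_ball.preimage (evalC t₀)).measurableSet)
      (fun a b hab => Set.preimage_mono (Metric.ball_subset_ball (by exact_mod_cast hab)))
      (by
        rw [Set.eq_univ_iff_forall]
        intro x
        obtain ⟨k, hk⟩ := exists_nat_gt (‖x t₀‖)
        exact Set.mem_iUnion.mpr ⟨k, by simpa [mem_ball_zero_iff] using hk⟩)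
      (η := ENNReal.ofReal (εr / 2)) (by positivity)
    set B := (fun x : PathSpace d T => x t₀) ⁻¹' Metric.ball 0 m with hBdef
    have hBopen : IsOpen B := Metric.isOpen_ball.preimage (evalC t₀)
    set L := Metric.closedBall (0 : EuclideanSpace ℝ (Fin d)) (m + 1) with hLdef
    have hLcpt : IsCompact L := isCompact_closedBall 0 _
    obtain ⟨δ₀, hδ₀pos, hδ₀⟩ := Metric.uniformContinuousOn_iff.mp
      (hLcpt.uniformContinuousOn_of_continuous g.continuous.continuousOn) (ε / 4) (by positivity)
    set δ₂ := min δ₀ 1 with hδ₂def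
    have hδ₂pos : 0 < δ₂ := lt_min hδ₀pos one_pos
    have hδ₂le1 : δ₂ ≤ 1 := min_le_right _ _
    have hδ₂le : δ₂ ≤ δ₀ := min_le_left _ _
    -- Step 2: choose the equicontinuity set W n
    set A : ℕ → Set (PathSpace d T) := fun n =>
      {y | ∀ s ∈ Metric.closedBall t₀ (1 / (n + 1 : ℝ)), dist (y s) (y t₀) ≤ δ₂ / 2} with hAdef
    set W : ℕ → Set (PathSpace d T) := fun n => ⋃ y ∈ A n, Metric.ball y (δ₂ / 8) with hWdef
    have hWopen : ∀ n, IsOpen (W n) := fun n => isOpen_biUnion (fun _ _ => Metric.isOpen_ball)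
    have hWmono : Monotone W := by
      intro a b hab
      have hA : A a ⊆ A b := by
        intro y hy s hs
        refine hy s ?_
        refine Metric.closedBall_subset_closedBall ?_ hs
        apply one_div_le_one_div_of_le (by positivity)
        have : (a : ℝ) ≤ b := by exact_mod_cast hab
        linarith
      exact Set.biUnion_subset_biUnion_left hA
    have hWcov : (⋃ n, W n) = Set.univ := by
      rw [Set.eq_univ_iff_forall]
      intro x
      obtain ⟨δ, hδpos, hδ⟩ := Metric.continuousAt_iff.mp (x.continuous.continuousAt (x := t₀))
        (δ₂ / 2) (by positivity)
      obtain ⟨n, hn⟩ := exists_nat_one_div_lt hδpos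
      refine Set.mem_iUnion.mpr ⟨n, Set.mem_biUnion ?_ (Metric.mem_ball_self (by positivity))⟩
      intro s hs
      exact le_of_lt (hδ (lt_of_le_of_lt (Metric.mem_closedBall.mp hs) hn))
    obtain ⟨n, hn⟩ := aux_compl_lt (ν₀ : Measure (PathSpace d T)) W
      (fun n => (hWopen n).measurableSet) hWmono hWcov
      (η := ENNReal.ofReal (εr / 2)) (by positivity)
    set U := B ∩ W n with hUdef
    have hUopen : IsOpen U := hBopen.inter (hWopen n)
    -- pointwise estimate on U
    have hpoint : ∀ x ∈ U, ∀ t ∈ Metric.closedBall t₀ (1 / (n + 1 : ℝ)),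
        dist (g (x t)) (g (x t₀)) < ε / 4 := by
      rintro x ⟨hxB, hxW⟩ t ht
      obtain ⟨y, hyA, hxy⟩ := Set.mem_iUnion₂.mp hxW
      have hxy' : dist x y < δ₂ / 8 := Metric.mem_ball.mp hxy
      have h1 : dist (x t) (x t₀) < δ₂ := by
        have e1 : dist (x t) (y t) ≤ dist x y := ContinuousMap.dist_apply_le_dist t
        have e2 : dist (y t) (y t₀) ≤ δ₂ / 2 := hyA t ht
        have e3 : dist (y t₀) (x t₀) ≤ dist x y := by
          rw [dist_comm]
          exact ContinuousMap.dist_apply_le_dist t₀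
        calc dist (x t) (x t₀)
            ≤ dist (x t) (y t) + dist (y t) (y t₀) + dist (y t₀) (x t₀) := dist_triangle4 _ _ _ _
          _ < δ₂ := by linarith
      have hx0 : ‖x t₀‖ < m := mem_ball_zero_iff.mp hxB
      have hmem0 : x t₀ ∈ L := mem_closedBall_zero_iff.mpr (by linarith)
      have hmemt : x t ∈ L := by
        refine mem_closedBall_zero_iff.mpr ?_
        have h4 : ‖x t‖ ≤ dist (x t) (x t₀) + ‖x t₀‖ := by
          simpa [dist_zero_right] using dist_triangle (x t) (x t₀) 0
        linarith
      exact hδ₀ _ hmemt _ hmem0 (lt_of_lt_of_le h1 hδ₂le)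
    -- eventual facts
    have ev1 : ∀ᶠ p : ProbabilityMeasure (PathSpace d T) × Set.Icc (0:ℝ) T in nhds (ν₀, t₀),
        p.2 ∈ Metric.closedBall t₀ (1 / (n + 1 : ℝ)) :=
      hsnd (Metric.closedBall_mem_nhds t₀ (by positivity))
    have ev2 : ∀ᶠ p : ProbabilityMeasure (PathSpace d T) × Set.Icc (0:ℝ) T in nhds (ν₀, t₀),
        ((p.1 : Measure (PathSpace d T)) Uᶜ) < ENNReal.ofReal εr := by
      have hcl := ProbabilityMeasure.limsup_measure_closed_le_of_tendsto hfst
        (hUopen.isClosed_compl)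
      refine Filter.eventually_lt_of_limsup_lt (lt_of_le_of_lt hcl ?_)
      have hsub : (ν₀ : Measure (PathSpace d T)) Uᶜ
          ≤ (ν₀ : Measure (PathSpace d T)) Bᶜ + (ν₀ : Measure (PathSpace d T)) (W n)ᶜ := by
        rw [hUdef, Set.compl_inter]
        exact measure_union_le _ _
      calc (ν₀ : Measure (PathSpace d T)) Uᶜ
          ≤ (ν₀ : Measure (PathSpace d T)) Bᶜ + (ν₀ : Measure (PathSpace d T)) (W n)ᶜ := hsub
        _ < ENNReal.ofReal (εr / 2) + ENNReal.ofReal (εr / 2) := ENNReal.add_lt_add hm hn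
        _ = ENNReal.ofReal εr := by
            rw [← ENNReal.ofReal_add (by positivity) (by positivity)]
            norm_num
    have ev3 : ∀ᶠ p : ProbabilityMeasure (PathSpace d T) × Set.Icc (0:ℝ) T in nhds (ν₀, t₀),
        dist (∫ x, g (x t₀) ∂(p.1 : Measure (PathSpace d T)))
          (∫ x, g (x t₀) ∂(ν₀ : Measure (PathSpace d T))) < ε / 4 := by
      have h := ProbabilityMeasure.tendsto_iff_forall_integral_tendsto.mp
        (Filter.tendsto_id (x := nhds ν₀)) (g.compContinuous ⟨fun x => x t₀, evalC t₀⟩)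
      have h2 := Metric.tendsto_nhds.mp (h.comp hfst) (ε / 4) (by positivity)
      simpa using h2
    filter_upwards [ev1, ev2, ev3] with p hp1 hp2 hp3
    have hint1 : Integrable (fun x => g (x p.2)) (p.1 : Measure (PathSpace d T)) := by
      simpa [Function.comp_def] using (g.compContinuous ⟨fun x : PathSpace d T => x p.2, evalC p.2⟩).integrable
        (p.1 : Measure (PathSpace d T))
    have hint0 : Integrable (fun x => g (x t₀)) (p.1 : Measure (PathSpace d T)) := by
      simpa [Function.comp_def] using (g.compContinuous ⟨fun x : PathSpace d T => x t₀, evalC t₀⟩).integrable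
        (p.1 : Measure (PathSpace d T))
    have hUc_meas : MeasurableSet Uᶜ := hUopen.isClosed_compl.measurableSet
    have hUc_real : ((p.1 : Measure (PathSpace d T)) Uᶜ).toReal ≤ εr :=
      ENNReal.toReal_le_of_le_ofReal (le_of_lt hεrpos) (le_of_lt hp2)
    have hb : ∀ x, |g (x p.2) - g (x t₀)| ≤ ε / 4 + Set.indicator Uᶜ (fun _ => 2 * C) x := by
      intro x
      by_cases hx : x ∈ U
      · rw [Set.indicator_of_notMem (by simpa using hx)]
        have := hpoint x hx p.2 hp1
        rw [Real.dist_eq] at this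
        linarith
      · rw [Set.indicator_of_mem (by simpa using hx)]
        have h1 : |g (x p.2)| ≤ C := by
          simpa [Real.norm_eq_abs] using g.norm_coe_le_norm (x p.2)
        have h2 : |g (x t₀)| ≤ C := by
          simpa [Real.norm_eq_abs] using g.norm_coe_le_norm (x t₀)
        calc |g (x p.2) - g (x t₀)| ≤ |g (x p.2)| + |g (x t₀)| := abs_sub _ _
          _ ≤ ε / 4 + 2 * C := by linarith
    have hterm1 : |∫ x, g (x p.2) ∂(p.1 : Measure (PathSpace d T))
        - ∫ x, g (x t₀) ∂(p.1 : Measure (PathSpace d T))| ≤ ε / 4 + ε / 4 := by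
      rw [← integral_sub hint1 hint0]
      have hbound_int : Integrable
          (fun x => ε / 4 + Set.indicator Uᶜ (fun _ => 2 * C) x)
          (p.1 : Measure (PathSpace d T)) :=
        (integrable_const _).add ((integrable_const _).indicator hUc_meas)
      calc |∫ x, (g (x p.2) - g (x t₀)) ∂(p.1 : Measure (PathSpace d T))|
          ≤ ∫ x, |g (x p.2) - g (x t₀)| ∂(p.1 : Measure (PathSpace d T)) := by
            simpa [Real.norm_eq_abs] using norm_integral_le_integral_norm
              (μ := (p.1 : Measure (PathSpace d T))) (f := fun x => g (x p.2) - g (x t₀))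
        _ ≤ ∫ x, (ε / 4 + Set.indicator Uᶜ (fun _ => 2 * C) x)
              ∂(p.1 : Measure (PathSpace d T)) :=
            integral_mono (hint1.sub hint0).abs hbound_int hb
        _ = ε / 4 + ((p.1 : Measure (PathSpace d T)) Uᶜ).toReal * (2 * C) := by
            rw [integral_add (integrable_const _) ((integrable_const _).indicator hUc_meas),
              integral_const, integral_indicator_const _ hUc_meas]
            simp [smul_eq_mul]
            left
            rw [← ProbabilityMeasure.ennreal_coeFn_eq_coeFn_toMeasure, ENNReal.coe_toReal]
        _ ≤ ε / 4 + ε / 4 := by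
            have h5 : ((p.1 : Measure (PathSpace d T)) Uᶜ).toReal * (2 * C) ≤ εr * (2 * C) := by
              apply mul_le_mul_of_nonneg_right hUc_real (by positivity)
            have h6 : εr * (2 * C) ≤ ε / 4 := by
              rw [hεrdef]
              rw [div_mul_eq_mul_div]
              rw [div_le_div_iff₀ (by positivity) (by norm_num)]
              nlinarith
            linarith
    rw [Real.dist_eq]
    have habs : |∫ x, g (x p.2) ∂(p.1 : Measure (PathSpace d T))
          - ∫ x, g (x t₀) ∂(ν₀ : Measure (PathSpace d T))|
        ≤ |∫ x, g (x p.2) ∂(p.1 : Measure (PathSpace d T))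
            - ∫ x, g (x t₀) ∂(p.1 : Measure (PathSpace d T))|
          + |∫ x, g (x t₀) ∂(p.1 : Measure (PathSpace d T))
            - ∫ x, g (x t₀) ∂(ν₀ : Measure (PathSpace d T))| := abs_sub_le _ _ _
    rw [Real.dist_eq] at hp3
    calc |∫ x, g (x p.2) ∂(p.1 : Measure (PathSpace d T))
          - ∫ x, g (x t₀) ∂(ν₀ : Measure (PathSpace d T))|
        ≤ _ + _ := habs
      _ < (ε / 4 + ε / 4) + ε / 4 := by
          have := hterm1
          apply add_lt_add_of_le_of_lt this hp3
      _ < ε := by linarith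
  exact ⟨fun ν => key.comp (Continuous.prodMk_right ν), key⟩

end
end
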